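/- With the setup of the generalized resultant (F = GF(q), α of multiplicative order at least r, positive μ_0,…,μ_ℓ summing to r, τ_i = r − μ_i, echelon matrices A_i(β_i) built from the coefficients of M_i(x;β_i) = Π_{j=0}^{τ_i−1}(x − β_i α^j), and A(β) their stacking), for every pair of distinct indices i, k ∈ {0, 1, …, ℓ}, the multivariate polynomial Δ(β) = det(A(β)) is divisible, in the polynomial ring F[β_0, …, β_ℓ], by Π_{t=0}^{μ_k−1} (β_k − β_i α^t)^{min{μ_i, μ_k − t}}. -/

import Mathlib

/-- The polynomial `M_i(x; β_i) = Π_{j=0}^{τ_i - 1} (x - β_i α^j)`, `τ_i = r - μ_i`,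
viewed as a univariate polynomial in `x` whose coefficients are multivariate
polynomials over `F` in the indeterminates `β_0, …, β_ℓ`. -/
noncomputable def burstM (F : Type*) [Field F] (ℓ r : ℕ) (α : F)
    (μ : Fin (ℓ + 1) → ℕ) (i : Fin (ℓ + 1)) :
    Polynomial (MvPolynomial (Fin (ℓ + 1)) F) :=
  ∏ j ∈ Finset.range (r - μ i),
    (Polynomial.X - Polynomial.C (MvPolynomial.C (α ^ j) * MvPolynomial.X i))

/-- The `r × r` matrix `A(β)` obtained by stacking the `μ_i × r` echelon
matrices `A_i(β_i)`: rows `s` with `Σ_{k<i} μ_k ≤ s < Σ_{k≤i} μ_k` belong to the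
`i`-th block; such a row, with offset `h = s - Σ_{k<i} μ_k`, carries the
coefficients `M_{i,0}, …, M_{i,τ_i}` of `M_i(x; β_i)` in columns `h, …, h + τ_i`
and zeros elsewhere. (Exactly one summand below is nonzero for each row.) -/
noncomputable def burstA (F : Type*) [Field F] (ℓ r : ℕ) (α : F)
    (μ : Fin (ℓ + 1) → ℕ) :
    Matrix (Fin r) (Fin r) (MvPolynomial (Fin (ℓ + 1)) F) :=
  Matrix.of fun s j =>
    ∑ i : Fin (ℓ + 1),
      if (∑ k ∈ Finset.Iio i, μ k) ≤ (s : ℕ) ∧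
          (s : ℕ) < (∑ k ∈ Finset.Iio i, μ k) + μ i ∧
          (s : ℕ) - (∑ k ∈ Finset.Iio i, μ k) ≤ (j : ℕ) then
        (burstM F ℓ r α μ i).coeff
          ((j : ℕ) - ((s : ℕ) - ∑ k ∈ Finset.Iio i, μ k))
      else 0


namespace GenResAux

open Finset Polynomial

theorem prod_pow_primes_dvd {M : Type*} [CommMonoidWithZero M] [IsCancelMulZero M]
    {ι : Type*} [DecidableEq ι] (s : Finset ι) (p : ι → M) (n : ι → ℕ) (a : M)
    (hp : ∀ t ∈ s, Prime (p t))
    (hnd : ∀ t ∈ s, ∀ u ∈ s, t ≠ u → ¬ p t ∣ p u)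
    (h : ∀ t ∈ s, p t ^ n t ∣ a) :
    (∏ t ∈ s, p t ^ n t) ∣ a := by
  induction s using Finset.induction_on with
  | empty => simpa using one_dvd a
  | @insert t s hts ih =>
    rw [Finset.prod_insert hts]
    have hps : (∏ u ∈ s, p u ^ n u) ∣ a :=
      ih (fun u hu => hp u (mem_insert_of_mem hu))
        (fun u hu v hv huv => hnd u (mem_insert_of_mem hu) v (mem_insert_of_mem hv) huv)
        (fun u hu => h u (mem_insert_of_mem hu))
    obtain ⟨b, rfl⟩ := hps
    have hpt : Prime (p t) := hp t (mem_insert_self t s)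
    have hnd2 : ¬ p t ∣ ∏ u ∈ s, p u ^ n u := by
      intro hdvd
      obtain ⟨u, hu, hdvd2⟩ := hpt.exists_mem_finset_dvd hdvd
      exact hnd t (mem_insert_self t s) u (mem_insert_of_mem hu)
        (fun he => hts (he ▸ hu)) (hpt.dvd_of_dvd_pow hdvd2)
    have hb : p t ^ n t ∣ b :=
      hpt.pow_dvd_of_dvd_mul_left (n t) hnd2 (h t (mem_insert_self t s))
    calc p t ^ n t * ∏ u ∈ s, p u ^ n u ∣ b * ∏ u ∈ s, p u ^ n u :=
          mul_dvd_mul_right hb _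
      _ = (∏ u ∈ s, p u ^ n u) * b := mul_comm _ _

variable {F : Type*} [Field F] {ℓ : ℕ}

def nu (μ : Fin (ℓ + 1) → ℕ) : ℕ → ℕ := fun n => if h : n < ℓ + 1 then μ ⟨n, h⟩ else 0

def sig (μ : Fin (ℓ + 1) → ℕ) : ℕ → ℕ := fun n => ∑ j ∈ Finset.range n, nu μ j

lemma nu_val (μ : Fin (ℓ + 1) → ℕ) (b : Fin (ℓ + 1)) : nu μ b.val = μ b := by
  simp [nu, b.isLt]

lemma sig_mono (μ : Fin (ℓ + 1) → ℕ) : Monotone (sig μ) := fun a b hab =>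
  Finset.sum_le_sum_of_subset (Finset.range_subset_range.2 hab)

lemma sig_succ (μ : Fin (ℓ + 1) → ℕ) (n : ℕ) : sig μ (n + 1) = sig μ n + nu μ n :=
  Finset.sum_range_succ _ _

lemma sum_Iio_eq (μ : Fin (ℓ + 1) → ℕ) (b : Fin (ℓ + 1)) :
    ∑ j ∈ Finset.Iio b, μ j = sig μ b.val := by
  rw [sig]
  refine Finset.sum_bij' (fun a _ => a.val) (fun n hn => ⟨n, ?_⟩) ?_ ?_ ?_ ?_ ?_
  · exact lt_trans (Finset.mem_range.1 hn) b.isLt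
  · intro a ha; exact Finset.mem_range.2 (Fin.lt_def.mp (Finset.mem_Iio.1 ha))
  · intro n hn; exact Finset.mem_Iio.2 (by simpa [Fin.lt_def] using Finset.mem_range.1 hn)
  · intro a _; rfl
  · intro n _; rfl
  · intro a _; rw [nu_val]

lemma sig_total {r : ℕ} (μ : Fin (ℓ + 1) → ℕ) (hsum : ∑ i, μ i = r) : sig μ (ℓ + 1) = r := by
  rw [sig, ← Fin.sum_univ_eq_sum_range (nu μ) (ℓ + 1)]
  rw [← hsum]
  exact Finset.sum_congr rfl fun j _ => nu_val μ j

lemma sig_add_le {r : ℕ} (μ : Fin (ℓ + 1) → ℕ) (hsum : ∑ i, μ i = r) (b : Fin (ℓ + 1)) :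
    sig μ b.val + μ b ≤ r := by
  have h1 : sig μ (b.val + 1) ≤ sig μ (ℓ + 1) := sig_mono μ b.isLt
  rw [sig_succ, nu_val, sig_total μ hsum] at h1
  exact h1

lemma sig_block_le (μ : Fin (ℓ + 1) → ℕ) {b b' : Fin (ℓ + 1)} (h : b < b') :
    sig μ b.val + μ b ≤ sig μ b'.val := by
  have := sig_mono μ (show b.val + 1 ≤ b'.val from h)
  rw [sig_succ, nu_val] at this
  exact this

lemma block_exists {r : ℕ} (μ : Fin (ℓ + 1) → ℕ) (hsum : ∑ i, μ i = r) (u : ℕ) (hu : u < r) :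
    ∃ b : Fin (ℓ + 1), sig μ b.val ≤ u ∧ u < sig μ b.val + μ b := by
  have aux : ∀ N : ℕ, N ≤ ℓ + 1 → u < sig μ N →
      ∃ b : Fin (ℓ + 1), b.val < N ∧ sig μ b.val ≤ u ∧ u < sig μ b.val + μ b := by
    intro N
    induction N with
    | zero => intro _ h; simp [sig] at h
    | succ n ih =>
      intro hn h
      by_cases hc : sig μ n ≤ u
      · refine ⟨⟨n, by omega⟩, by simp, hc, ?_⟩
        rw [sig_succ] at h
        have hν : nu μ n = μ ⟨n, by omega⟩ := by simp [nu, Nat.lt_of_succ_le hn]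
        simp only [Fin.val_mk]
        omega
      · obtain ⟨b, h1, h2⟩ := ih (by omega) (by omega)
        exact ⟨b, by omega, h2⟩
  obtain ⟨b, _, h⟩ := aux (ℓ + 1) le_rfl (by rw [sig_total μ hsum]; exact hu)
  exact ⟨b, h⟩

lemma burstA_apply (r : ℕ) (α : F) (μ : Fin (ℓ + 1) → ℕ) (s j : Fin r) (b : Fin (ℓ + 1))
    (hb1 : sig μ b.val ≤ s.val) (hb2 : s.val < sig μ b.val + μ b) :
    burstA F ℓ r α μ s j
      = (burstM F ℓ r α μ b * Polynomial.X ^ (s.val - sig μ b.val)).coeff j.val := by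
  show (∑ c : Fin (ℓ + 1), _) = _
  rw [Finset.sum_eq_single b]
  · rw [sum_Iio_eq, Polynomial.coeff_mul_X_pow']
    by_cases hc : s.val - sig μ b.val ≤ j.val
    · rw [if_pos ⟨hb1, hb2, hc⟩, if_pos hc]
    · rw [if_neg (by tauto), if_neg hc]
  · intro c _ hcb
    rw [sum_Iio_eq, if_neg]
    rintro ⟨h1, h2, -⟩
    rcases lt_or_gt_of_ne hcb with hlt | hlt
    · have := sig_block_le μ hlt; omega
    · have := sig_block_le μ hlt; omega
  · intro h; exact absurd (Finset.mem_univ b) h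

/-- The substitution `β_k ↦ ε + α^t β_i`, other variables fixed, landing in
polynomials in `ε` over the multivariate ring. -/
noncomputable def psi (α : F) (i k : Fin (ℓ + 1)) (t : ℕ) :
    MvPolynomial (Fin (ℓ + 1)) F →+* Polynomial (MvPolynomial (Fin (ℓ + 1)) F) :=
  MvPolynomial.eval₂Hom (Polynomial.C.comp MvPolynomial.C)
    fun j => if j = k then
        Polynomial.X + Polynomial.C (MvPolynomial.C (α ^ t) * MvPolynomial.X i)
      else Polynomial.C (MvPolynomial.X j)

@[simp] lemma psi_C (α : F) (i k : Fin (ℓ + 1)) (t : ℕ) (a : F) :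
    psi α i k t (MvPolynomial.C a) = Polynomial.C (MvPolynomial.C a) := by
  simp [psi]

lemma psi_X_ne (α : F) (i k : Fin (ℓ + 1)) (t : ℕ) {j : Fin (ℓ + 1)} (h : j ≠ k) :
    psi α i k t (MvPolynomial.X j) = Polynomial.C (MvPolynomial.X j) := by
  simp [psi, h]

lemma psi_X_k (α : F) (i k : Fin (ℓ + 1)) (t : ℕ) :
    psi α i k t (MvPolynomial.X k)
      = Polynomial.X + Polynomial.C (MvPolynomial.C (α ^ t) * MvPolynomial.X i) := by
  simp [psi]

/-- linear factor with root `α^j β_i`, with coefficients constant in `ε`. -/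
noncomputable def lin (α : F) (i : Fin (ℓ + 1)) (j : ℕ) :
    Polynomial (Polynomial (MvPolynomial (Fin (ℓ + 1)) F)) :=
  Polynomial.X - Polynomial.C (Polynomial.C (MvPolynomial.C (α ^ j) * MvPolynomial.X i))

/-- linear factor with root `α^j β_i` over the multivariate ring itself. -/
noncomputable def lin0 (α : F) (i : Fin (ℓ + 1)) (j : ℕ) :
    Polynomial (MvPolynomial (Fin (ℓ + 1)) F) :=
  Polynomial.X - Polynomial.C (MvPolynomial.C (α ^ j) * MvPolynomial.X i)

lemma lin_monic (α : F) (i : Fin (ℓ + 1)) (j : ℕ) : (lin α i j).Monic :=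
  Polynomial.monic_X_sub_C _

lemma lin_natDegree (α : F) (i : Fin (ℓ + 1)) (j : ℕ) : (lin α i j).natDegree = 1 :=
  Polynomial.natDegree_X_sub_C _

lemma lin_map0 (α : F) (i : Fin (ℓ + 1)) (j : ℕ) :
    (lin α i j).map (Polynomial.constantCoeff) = lin0 α i j := by
  simp [lin, lin0, Polynomial.map_sub]

lemma burstM_map_psi_i {r : ℕ} (α : F) (μ : Fin (ℓ + 1) → ℕ) (i k : Fin (ℓ + 1)) (t : ℕ)
    (hik : i ≠ k) :
    (burstM F ℓ r α μ i).map (psi α i k t) = ∏ j ∈ Finset.range (r - μ i), lin α i j := by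
  rw [burstM, Polynomial.map_prod]
  refine Finset.prod_congr rfl fun j _ => ?_
  rw [Polynomial.map_sub, Polynomial.map_X, Polynomial.map_C, map_mul, psi_X_ne α i k t hik, lin]
  rw [psi_C, ← Polynomial.C_mul]

lemma burstM_map_psi_k {r : ℕ} (α : F) (μ : Fin (ℓ + 1) → ℕ) (i k : Fin (ℓ + 1)) (t : ℕ) :
    (burstM F ℓ r α μ k).map (psi α i k t)
      = ∏ j ∈ Finset.range (r - μ k),
          (Polynomial.X - Polynomial.C
            (Polynomial.C (MvPolynomial.C (α ^ j)) * Polynomial.X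
              + Polynomial.C (MvPolynomial.C (α ^ (t + j)) * MvPolynomial.X i))) := by
  rw [burstM, Polynomial.map_prod]
  refine Finset.prod_congr rfl fun j _ => ?_
  rw [Polynomial.map_sub, Polynomial.map_X, Polynomial.map_C, map_mul, psi_X_k, psi_C]
  congr 1
  rw [mul_add, ← Polynomial.C_mul]
  rw [← mul_assoc, ← MvPolynomial.C_mul, ← pow_add, Nat.add_comm j t]

lemma burstM_map_psi_k_c0 {r : ℕ} (α : F) (μ : Fin (ℓ + 1) → ℕ) (i k : Fin (ℓ + 1)) (t : ℕ) :
    ((burstM F ℓ r α μ k).map (psi α i k t)).map Polynomial.constantCoeff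
      = ∏ j ∈ Finset.range (r - μ k), lin0 α i (t + j) := by
  rw [burstM_map_psi_k, Polynomial.map_prod]
  refine Finset.prod_congr rfl fun j _ => ?_
  rw [Polynomial.map_sub, Polynomial.map_X, Polynomial.map_C, lin0]
  congr 1
  rw [Polynomial.constantCoeff_apply, Polynomial.coeff_add, Polynomial.coeff_C_mul,
    Polynomial.coeff_X_zero, Polynomial.coeff_C_zero, mul_zero, zero_add]

/-- the quotient of `M_i^0` by the common factor, lifted to bivariate level -/
noncomputable def Qpoly (α : F) (i : Fin (ℓ + 1)) (t d τi : ℕ) :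
    Polynomial (Polynomial (MvPolynomial (Fin (ℓ + 1)) F)) :=
  (∏ j ∈ Finset.range t, lin α i j) * ∏ j ∈ Finset.Ico (t + d) τi, lin α i j

/-- `x^h` times the quotient of `M_k^0` by the common factor -/
noncomputable def Ppoly (α : F) (i : Fin (ℓ + 1)) (t d τk h : ℕ) :
    Polynomial (Polynomial (MvPolynomial (Fin (ℓ + 1)) F)) :=
  Polynomial.X ^ h * ∏ j ∈ Finset.Ico (t + d) (t + τk), lin α i j

lemma Qpoly_monic (α : F) (i : Fin (ℓ + 1)) (t d τi : ℕ) : (Qpoly α i t d τi).Monic :=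
  ((Polynomial.monic_prod_of_monic _ _ fun j _ => lin_monic α i j).mul
    (Polynomial.monic_prod_of_monic _ _ fun j _ => lin_monic α i j))

lemma Qpoly_natDegree (α : F) (i : Fin (ℓ + 1)) (t d τi : ℕ) (h : t + d ≤ τi) :
    (Qpoly α i t d τi).natDegree = τi - d := by
  rw [Qpoly, Polynomial.Monic.natDegree_mul
        (Polynomial.monic_prod_of_monic _ _ fun j _ => lin_monic α i j)
        (Polynomial.monic_prod_of_monic _ _ fun j _ => lin_monic α i j),
      Polynomial.natDegree_prod_of_monic _ _ (fun j _ => lin_monic α i j),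
      Polynomial.natDegree_prod_of_monic _ _ (fun j _ => lin_monic α i j)]
  simp only [lin_natDegree, Finset.sum_const, smul_eq_mul, mul_one, Finset.card_range,
    Nat.card_Ico]
  omega

lemma Ppoly_monic (α : F) (i : Fin (ℓ + 1)) (t d τk h : ℕ) : (Ppoly α i t d τk h).Monic :=
  (Polynomial.monic_X_pow h).mul
    (Polynomial.monic_prod_of_monic _ _ fun j _ => lin_monic α i j)

lemma Ppoly_natDegree (α : F) (i : Fin (ℓ + 1)) (t d τk h : ℕ) (hd : d ≤ τk) :
    (Ppoly α i t d τk h).natDegree = h + (τk - d) := by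
  rw [Ppoly, Polynomial.Monic.natDegree_mul (Polynomial.monic_X_pow h)
        (Polynomial.monic_prod_of_monic _ _ fun j _ => lin_monic α i j),
      Polynomial.natDegree_prod_of_monic _ _ (fun j _ => lin_monic α i j)]
  simp only [lin_natDegree, Finset.sum_const, smul_eq_mul, mul_one, Nat.card_Ico,
    Polynomial.natDegree_X_pow]
  omega

/-- the fundamental common-multiple identity -/
lemma prod_ident (α : F) (i : Fin (ℓ + 1)) (t d τi τk : ℕ) (h1 : t + d ≤ τi) (h2 : d ≤ τk) :
    ((∏ j ∈ Finset.range t, lin0 α i j) * ∏ j ∈ Finset.Ico (t + d) τi, lin0 α i j)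
        * ∏ j ∈ Finset.Ico t (t + τk), lin0 α i j
      = (∏ j ∈ Finset.Ico (t + d) (t + τk), lin0 α i j)
          * ∏ j ∈ Finset.range τi, lin0 α i j := by
  have e1 : (∏ j ∈ Finset.Ico t (t + d), lin0 α i j) * ∏ j ∈ Finset.Ico (t + d) (t + τk), lin0 α i j
      = ∏ j ∈ Finset.Ico t (t + τk), lin0 α i j :=
    Finset.prod_Ico_consecutive _ (by omega) (by omega)
  have e2 : (∏ j ∈ Finset.Ico 0 t, lin0 α i j) * ∏ j ∈ Finset.Ico t τi, lin0 α i j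
      = ∏ j ∈ Finset.Ico 0 τi, lin0 α i j :=
    Finset.prod_Ico_consecutive _ (by omega) (by omega)
  have e3 : (∏ j ∈ Finset.Ico t (t + d), lin0 α i j) * ∏ j ∈ Finset.Ico (t + d) τi, lin0 α i j
      = ∏ j ∈ Finset.Ico t τi, lin0 α i j :=
    Finset.prod_Ico_consecutive _ (by omega) (by omega)
  rw [Finset.range_eq_Ico, Finset.range_eq_Ico, ← e1, ← e2, ← e3]
  ring

/-- expanding a product coefficient as a combination of shifted coefficients -/
lemma coeff_combination {S : Type*} [CommRing S] (G M : Polynomial S) (n : ℕ)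
    (hG : G.natDegree < n) (j : ℕ) :
    ∑ o ∈ Finset.range n, G.coeff o * (M * Polynomial.X ^ o).coeff j = (G * M).coeff j := by
  conv_rhs => rw [G.as_sum_range' n hG]
  rw [Finset.sum_mul, Polynomial.finset_sum_coeff]
  refine Finset.sum_congr rfl fun o _ => ?_
  rw [← Polynomial.C_mul_X_pow_eq_monomial]
  have : Polynomial.C (G.coeff o) * Polynomial.X ^ o * M
      = Polynomial.C (G.coeff o) * (M * Polynomial.X ^ o) := by ring
  rw [this, Polynomial.coeff_C_mul]

lemma prime_X_fin (k : Fin (ℓ + 1)) : Prime (MvPolynomial.X k : MvPolynomial (Fin (ℓ + 1)) F) := by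
  have h0 : Prime (MvPolynomial.X (0 : Fin (ℓ + 1)) : MvPolynomial (Fin (ℓ + 1)) F) := by
    rw [← MulEquiv.prime_iff (MvPolynomial.finSuccEquiv F ℓ).toMulEquiv]
    have : (MvPolynomial.finSuccEquiv F ℓ).toMulEquiv (MvPolynomial.X 0) = Polynomial.X := by
      simpa using MvPolynomial.finSuccEquiv_X_zero (R := F) (n := ℓ)
    rw [this]
    exact Polynomial.prime_X
  rw [← MulEquiv.prime_iff (MvPolynomial.renameEquiv F (Equiv.swap (0 : Fin (ℓ + 1)) k)).toMulEquiv] at h0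
  have : (MvPolynomial.renameEquiv F (Equiv.swap (0 : Fin (ℓ + 1)) k)).toMulEquiv
      (MvPolynomial.X 0) = MvPolynomial.X k := by
    simp [MvPolynomial.renameEquiv_apply, MvPolynomial.rename_X]
  rwa [this] at h0

lemma prime_lin_factor (c : F) (i k : Fin (ℓ + 1)) (hik : i ≠ k) :
    Prime (MvPolynomial.X k - MvPolynomial.C c * MvPolynomial.X i :
      MvPolynomial (Fin (ℓ + 1)) F) := by
  let f1 : MvPolynomial (Fin (ℓ + 1)) F →ₐ[F] MvPolynomial (Fin (ℓ + 1)) F :=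
    MvPolynomial.aeval fun j => if j = k then
      MvPolynomial.X k - MvPolynomial.C c * MvPolynomial.X i else MvPolynomial.X j
  let f2 : MvPolynomial (Fin (ℓ + 1)) F →ₐ[F] MvPolynomial (Fin (ℓ + 1)) F :=
    MvPolynomial.aeval fun j => if j = k then
      MvPolynomial.X k + MvPolynomial.C c * MvPolynomial.X i else MvPolynomial.X j
  have h12 : f1.comp f2 = AlgHom.id F _ := by
    apply MvPolynomial.algHom_ext
    intro j
    by_cases h : j = k
    · subst h
      simp [f1, f2, hik]
    · simp [f1, f2, h]
  have h21 : f2.comp f1 = AlgHom.id F _ := by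
    apply MvPolynomial.algHom_ext
    intro j
    by_cases h : j = k
    · subst h
      simp [f1, f2, hik]
    · simp [f1, f2, h]
  let e : MvPolynomial (Fin (ℓ + 1)) F ≃ₐ[F] MvPolynomial (Fin (ℓ + 1)) F :=
    AlgEquiv.ofAlgHom f1 f2 h12 h21
  have hp := prime_X_fin (F := F) k
  rw [← MulEquiv.prime_iff e.toMulEquiv] at hp
  have : e.toMulEquiv (MvPolynomial.X k)
      = MvPolynomial.X k - MvPolynomial.C c * MvPolynomial.X i := by
    simp [e, f1]
  rwa [this] at hp

lemma lin_factor_not_dvd (α : F) (i k : Fin (ℓ + 1)) (hik : i ≠ k) {t u : ℕ}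
    (htu : α ^ t ≠ α ^ u) :
    ¬ (MvPolynomial.X k - MvPolynomial.C (α ^ t) * MvPolynomial.X i :
        MvPolynomial (Fin (ℓ + 1)) F) ∣
      (MvPolynomial.X k - MvPolynomial.C (α ^ u) * MvPolynomial.X i) := by
  intro hdvd
  let ev : MvPolynomial (Fin (ℓ + 1)) F →+* MvPolynomial (Fin (ℓ + 1)) F :=
    MvPolynomial.eval₂Hom MvPolynomial.C
      fun j => if j = k then MvPolynomial.C (α ^ t) * MvPolynomial.X i else MvPolynomial.X j
  have h1 : ev (MvPolynomial.X k - MvPolynomial.C (α ^ t) * MvPolynomial.X i) = 0 := by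
    simp [ev, hik]
  have h2 : ev (MvPolynomial.X k - MvPolynomial.C (α ^ u) * MvPolynomial.X i)
      = MvPolynomial.C (α ^ t - α ^ u) * MvPolynomial.X i := by
    simp [ev, hik]
    ring
  have := map_dvd ev hdvd
  rw [h1, h2] at this
  rw [zero_dvd_iff, mul_eq_zero] at this
  rcases this with h | h
  · rw [MvPolynomial.C_eq_zero, sub_eq_zero] at h
    exact htu h
  · exact MvPolynomial.X_ne_zero i h

/-- recovering divisibility in the multivariate ring from the `ε`-expansion -/
lemma dvd_of_psi_dvd (α : F) (i k : Fin (ℓ + 1)) (t : ℕ) (hik : i ≠ k) (m : ℕ)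
    (Δ : MvPolynomial (Fin (ℓ + 1)) F)
    (h : (Polynomial.X : Polynomial (MvPolynomial (Fin (ℓ + 1)) F)) ^ m ∣ psi α i k t Δ) :
    (MvPolynomial.X k - MvPolynomial.C (α ^ t) * MvPolynomial.X i) ^ m ∣ Δ := by
  set p : MvPolynomial (Fin (ℓ + 1)) F :=
    MvPolynomial.X k - MvPolynomial.C (α ^ t) * MvPolynomial.X i with hp
  have hcomp : (Polynomial.evalRingHom p).comp (psi α i k t) = RingHom.id _ := by
    apply MvPolynomial.ringHom_ext
    · intro a
      simp [psi]
    · intro j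
      by_cases hj : j = k
      · subst hj
        rw [RingHom.comp_apply, psi_X_k]
        simp [hp]
      · rw [RingHom.comp_apply, psi_X_ne α i k t hj]
        simp
  obtain ⟨q, hq⟩ := h
  have : Δ = Polynomial.evalRingHom p (psi α i k t Δ) := by
    rw [← RingHom.comp_apply, hcomp]; rfl
  rw [this, hq, map_mul, map_pow]
  have hX : (Polynomial.evalRingHom p) (Polynomial.X) = p := by simp
  rw [hX]
  exact Dvd.intro _ rfl


theorem x_pow_dvd {r : ℕ} (α : F) (μ : Fin (ℓ + 1) → ℕ) (i k : Fin (ℓ + 1)) (t : ℕ)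
    (hμ : ∀ b, 1 ≤ μ b) (hsum : ∑ b, μ b = r) (hik : i ≠ k) (ht : t < μ k) :
    (Polynomial.X : Polynomial (MvPolynomial (Fin (ℓ + 1)) F)) ^ (min (μ i) (μ k - t)) ∣
      ((burstA F ℓ r α μ).map (psi α i k t)).det := by
  classical
  set m := min (μ i) (μ k - t) with hm
  set d := min (r - μ i - t) (r - μ k) with hd
  set sk := sig μ k.val with hsk
  set si := sig μ i.val with hsi
  have hμi := hμ i
  have hμk := hμ k
  have hsum2 : μ i + μ k ≤ r := by
    have h1 : ∑ b ∈ ({i, k} : Finset (Fin (ℓ + 1))), μ b ≤ ∑ b, μ b :=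
      Finset.sum_le_sum_of_subset (Finset.subset_univ _)
    rw [Finset.sum_pair hik, hsum] at h1
    exact h1
  have hski : sk + μ k ≤ r := sig_add_le μ hsum k
  have hsii : si + μ i ≤ r := sig_add_le μ hsum i
  have hdisj : ∀ u : ℕ, ¬((sk ≤ u ∧ u < sk + μ k) ∧ (si ≤ u ∧ u < si + μ i)) := by
    rintro u ⟨⟨h1, h2⟩, ⟨h3, h4⟩⟩
    rcases lt_or_gt_of_ne hik with hlt | hlt
    · have := sig_block_le μ hlt; rw [← hsi, ← hsk] at this; omega
    · have := sig_block_le μ hlt; rw [← hsi, ← hsk] at this; omega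
  -- polynomials
  set Mψi := (burstM F ℓ r α μ i).map (psi α i k t) with hMψi
  set Mψk := (burstM F ℓ r α μ k).map (psi α i k t) with hMψk
  set Q := Qpoly α i t d (r - μ i) with hQ
  set Pp : ℕ → Polynomial (Polynomial (MvPolynomial (Fin (ℓ + 1)) F)) :=
    fun h => Ppoly α i t d (r - μ k) h with hPp
  have hQmonic : Q.Monic := Qpoly_monic α i t d (r - μ i)
  have hQdeg : Q.natDegree = μ k - m := by
    rw [hQ, Qpoly_natDegree α i t d (r - μ i) (by omega)]; omega
  have hXQmonic : ∀ h : ℕ, (Polynomial.X ^ h * Q).Monic :=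
    fun h => (Polynomial.monic_X_pow h).mul hQmonic
  have hXQdeg : ∀ h : ℕ, (Polynomial.X ^ h * Q).natDegree = h + (μ k - m) := by
    intro h
    rw [Polynomial.Monic.natDegree_mul (Polynomial.monic_X_pow h) hQmonic,
      Polynomial.natDegree_X_pow, hQdeg]
  have hPdeg : ∀ h : ℕ, (Pp h).natDegree = h + (μ i - m) := by
    intro h
    rw [hPp]
    rw [Ppoly_natDegree α i t d (r - μ k) h (by omega)]
    omega
  -- matrices
  set B := (burstA F ℓ r α μ).map (psi α i k t) with hB
  set Cm : Matrix (Fin r) (Fin r) (Polynomial (MvPolynomial (Fin (ℓ + 1)) F)) :=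
    Matrix.of (fun s u =>
      if sk + (μ k - m) ≤ s.val ∧ s.val < sk + μ k then
        (if sk ≤ u.val ∧ u.val < sk + μ k then
          (Polynomial.X ^ (s.val - (sk + (μ k - m))) * Q).coeff (u.val - sk)
        else if si ≤ u.val ∧ u.val < si + μ i then
          -(Pp (s.val - (sk + (μ k - m)))).coeff (u.val - si)
        else 0)
      else if u = s then 1 else 0) with hCm
  -- entries of B
  have hBapp : ∀ (u j : Fin r) (b : Fin (ℓ + 1)), sig μ b.val ≤ u.val →
      u.val < sig μ b.val + μ b →
      B u j = (((burstM F ℓ r α μ b).map (psi α i k t))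
        * Polynomial.X ^ (u.val - sig μ b.val)).coeff j.val := by
    intro u j b h1 h2
    show psi α i k t (burstA F ℓ r α μ u j) = _
    rw [burstA_apply r α μ u j b h1 h2, ← Polynomial.coeff_map,
      Polynomial.map_mul, Polynomial.map_pow, Polynomial.map_X]
  -- the key row computation
  have hrow : ∀ s : Fin r, sk + (μ k - m) ≤ s.val → s.val < sk + μ k → ∀ j : Fin r,
      (Cm * B) s j = ((Polynomial.X ^ (s.val - (sk + (μ k - m))) * Q) * Mψk
        - Pp (s.val - (sk + (μ k - m))) * Mψi).coeff j.val := by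
    intro s hs1 hs2 j
    set h := s.val - (sk + (μ k - m)) with hh
    have hhm : h < m := by omega
    rw [Matrix.mul_apply]
    set FK : Finset (Fin r) :=
      Finset.univ.filter (fun u : Fin r => sk ≤ u.val ∧ u.val < sk + μ k) with hFK
    set FI : Finset (Fin r) :=
      Finset.univ.filter (fun u : Fin r => si ≤ u.val ∧ u.val < si + μ i) with hFI
    have hdisjF : Disjoint FK FI := by
      rw [Finset.disjoint_left]
      intro u huK huI
      simp only [hFK, Finset.mem_filter] at huK
      simp only [hFI, Finset.mem_filter] at huI
      exact hdisj u.val ⟨huK.2, huI.2⟩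
    have hsplit : ∑ u : Fin r, Cm s u * B u j
        = (∑ u ∈ FK, Cm s u * B u j) + ∑ u ∈ FI, Cm s u * B u j := by
      rw [← Finset.sum_union hdisjF]
      symm
      apply Finset.sum_subset (Finset.subset_univ _)
      intro u _ hu
      have huK : ¬(sk ≤ u.val ∧ u.val < sk + μ k) := by
        intro hc
        refine hu (Finset.mem_union_left _ ?_)
        simp only [hFK, Finset.mem_filter]
        exact ⟨Finset.mem_univ u, hc⟩
      have huI : ¬(si ≤ u.val ∧ u.val < si + μ i) := by
        intro hc
        refine hu (Finset.mem_union_right _ ?_)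
        simp only [hFI, Finset.mem_filter]
        exact ⟨Finset.mem_univ u, hc⟩
      have : Cm s u = 0 := by
        rw [hCm]
        simp only [Matrix.of_apply]
        rw [if_pos ⟨hs1, hs2⟩, if_neg huK, if_neg huI]
      rw [this, zero_mul]
    rw [hsplit]
    have hk_sum : ∑ u ∈ FK, Cm s u * B u j
        = ((Polynomial.X ^ h * Q) * Mψk).coeff j.val := by
      rw [← coeff_combination (Polynomial.X ^ h * Q) Mψk (μ k)
        (by rw [hXQdeg]; omega) j.val]
      refine Finset.sum_bij' (fun (u : Fin r) (_ : u ∈ FK) => u.val - sk)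
        (fun (o : ℕ) (ho : o ∈ Finset.range (μ k)) =>
          (⟨sk + o, by have := Finset.mem_range.1 ho; omega⟩ : Fin r)) ?_ ?_ ?_ ?_ ?_
      · intro u hu
        simp only [hFK, Finset.mem_filter] at hu
        simp only [Finset.mem_range]
        omega
      · intro o ho
        simp only [hFK, Finset.mem_filter]
        have := Finset.mem_range.1 ho
        exact ⟨Finset.mem_univ _, by simp, by simp; omega⟩
      · intro u hu
        simp only [hFK, Finset.mem_filter] at hu
        apply Fin.ext
        simp
        omega
      · intro o ho
        simp
      · intro u hu
        simp only [hFK, Finset.mem_filter] at hu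
        rw [hBapp u j k (by rw [← hsk]; exact hu.2.1) (by rw [← hsk]; omega)]
        rw [hCm]
        simp only [Matrix.of_apply]
        rw [if_pos ⟨hs1, hs2⟩, if_pos hu.2, ← hh, ← hsk, ← hMψk]
    have hi_sum : ∑ u ∈ FI, Cm s u * B u j
        = -((Pp h * Mψi).coeff j.val) := by
      rw [← coeff_combination (Pp h) Mψi (μ i) (by rw [hPdeg]; omega) j.val]
      rw [← Finset.sum_neg_distrib]
      refine Finset.sum_bij' (fun (u : Fin r) (_ : u ∈ FI) => u.val - si)
        (fun (o : ℕ) (ho : o ∈ Finset.range (μ i)) =>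
          (⟨si + o, by have := Finset.mem_range.1 ho; omega⟩ : Fin r)) ?_ ?_ ?_ ?_ ?_
      · intro u hu
        simp only [hFI, Finset.mem_filter] at hu
        simp only [Finset.mem_range]
        omega
      · intro o ho
        simp only [hFI, Finset.mem_filter]
        have := Finset.mem_range.1 ho
        exact ⟨Finset.mem_univ _, by simp, by simp; omega⟩
      · intro u hu
        simp only [hFI, Finset.mem_filter] at hu
        apply Fin.ext
        simp
        omega
      · intro o ho
        simp
      · intro u hu
        simp only [hFI, Finset.mem_filter] at hu
        rw [hBapp u j i (by rw [← hsi]; exact hu.2.1) (by rw [← hsi]; omega)]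
        rw [hCm]
        simp only [Matrix.of_apply]
        have huK : ¬(sk ≤ u.val ∧ u.val < sk + μ k) := fun hc => hdisj u.val ⟨hc, hu.2⟩
        rw [if_pos ⟨hs1, hs2⟩, if_neg huK, if_pos hu.2, ← hh, ← hsi, ← hMψi]
        ring
    rw [hk_sum, hi_sum, Polynomial.coeff_sub]
    ring
  -- vanishing of extracted rows modulo ε
  have hzero : ∀ s : Fin r, sk + (μ k - m) ≤ s.val → s.val < sk + μ k → ∀ j : Fin r,
      ((Cm * B) s j).coeff 0 = 0 := by
    intro s hs1 hs2 j
    rw [hrow s hs1 hs2 j]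
    set h := s.val - (sk + (μ k - m)) with hh
    have hmap : ((Polynomial.X ^ h * Q) * Mψk - Pp h * Mψi).map Polynomial.constantCoeff
        = 0 := by
      rw [Polynomial.map_sub, Polynomial.map_mul, Polynomial.map_mul, Polynomial.map_mul,
        Polynomial.map_pow, Polynomial.map_X]
      rw [hMψk, burstM_map_psi_k_c0, hMψi, burstM_map_psi_i α μ i k t hik]
      simp only [hQ, hPp, Qpoly, Ppoly]
      rw [Polynomial.map_mul, Polynomial.map_mul, Polynomial.map_pow, Polynomial.map_X,
        Polynomial.map_prod, Polynomial.map_prod, Polynomial.map_prod, Polynomial.map_prod]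
      simp only [lin_map0]
      have hreindex : ∏ j' ∈ Finset.range (r - μ k), lin0 α i (t + j')
          = ∏ j' ∈ Finset.Ico t (t + (r - μ k)), lin0 α i j' := by
        rw [Finset.prod_Ico_eq_prod_range]
        simp
      rw [hreindex]
      have hident := prod_ident α i t d (r - μ i) (r - μ k) (by omega) (by omega)
      rw [sub_eq_zero]
      linear_combination (Polynomial.X : Polynomial
        (MvPolynomial (Fin (ℓ + 1)) F)) ^ h * hident
    have : (((Polynomial.X ^ h * Q) * Mψk - Pp h * Mψi).coeff j.val).coeff 0
        = (((Polynomial.X ^ h * Q) * Mψk - Pp h * Mψi).map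
            Polynomial.constantCoeff).coeff j.val := by
      rw [Polynomial.coeff_map]
      rfl
    rw [this, hmap, Polynomial.coeff_zero]
  -- triangularity and determinant of Cm
  set w : Fin r → ℕ := fun u => if sk ≤ u.val ∧ u.val < sk + μ k then 1 + (u.val - sk) else 0
    with hw
  have hwPos : ∀ u : Fin r, (sk ≤ u.val ∧ u.val < sk + μ k) → w u = 1 + (u.val - sk) := by
    intro u hu
    simp only [hw]
    rw [if_pos hu]
  have hwNeg : ∀ u : Fin r, ¬(sk ≤ u.val ∧ u.val < sk + μ k) → w u = 0 := by
    intro u hu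
    simp only [hw]
    rw [if_neg hu]
  have htri : (Cm.transpose).BlockTriangular w := by
    intro a b hab
    show Cm b a = 0
    by_cases haK : sk ≤ a.val ∧ a.val < sk + μ k
    · have hwa : w a = 1 + (a.val - sk) := hwPos a haK
      by_cases hbT : sk + (μ k - m) ≤ b.val ∧ b.val < sk + μ k
      · have hwb : w b = 1 + (b.val - sk) := hwPos b ⟨by omega, hbT.2⟩
        rw [hCm]
        simp only [Matrix.of_apply]
        rw [if_pos hbT, if_pos haK]
        apply Polynomial.coeff_eq_zero_of_natDegree_lt
        rw [hXQdeg]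
        rw [hwa, hwb] at hab
        omega
      · rw [hCm]
        simp only [Matrix.of_apply]
        rw [if_neg hbT, if_neg]
        intro he
        rw [he] at hab
        exact lt_irrefl _ hab
    · exfalso
      have hwa : w a = 0 := hwNeg a haK
      rw [hwa] at hab
      exact Nat.not_lt_zero _ hab
  have hdetC : Cm.det = 1 := by
    rw [← Matrix.det_transpose]
    rw [Matrix.BlockTriangular.det htri]
    apply Finset.prod_eq_one
    intro v hv
    obtain ⟨u0, -, hu0⟩ := Finset.mem_image.1 hv
    by_cases hu0K : sk ≤ u0.val ∧ u0.val < sk + μ k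
    · have hvval : v = 1 + (u0.val - sk) := by rw [← hu0, hwPos u0 hu0K]
      have hU : Unique {a : Fin r // w a = v} := by
        refine ⟨⟨⟨u0, hu0⟩⟩, ?_⟩
        rintro ⟨a, ha⟩
        apply Subtype.ext
        apply Fin.ext
        show a.val = u0.val
        by_cases haK : sk ≤ a.val ∧ a.val < sk + μ k
        · have h2 : v = 1 + (a.val - sk) := ha.symm.trans (hwPos a haK)
          omega
        · have h2 : v = 0 := ha.symm.trans (hwNeg a haK)
          omega
      rw [@Matrix.det_unique _ _ _ hU]
      have hdef : (default : {a : Fin r // w a = v}) = ⟨u0, hu0⟩ := (hU.uniq _).symm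
      rw [hdef]
      show Cm u0 u0 = 1
      rw [hCm]
      simp only [Matrix.of_apply]
      by_cases hT : sk + (μ k - m) ≤ u0.val
      · rw [if_pos ⟨hT, hu0K.2⟩, if_pos hu0K]
        have hidx : u0.val - sk
            = (Polynomial.X ^ (u0.val - (sk + (μ k - m))) * Q).natDegree := by
          rw [hXQdeg]; omega
        rw [hidx, Polynomial.Monic.coeff_natDegree (hXQmonic _)]
      · rw [if_neg (by omega : ¬(sk + (μ k - m) ≤ u0.val ∧ u0.val < sk + μ k))]
        simp
    · have hvval : v = 0 := by rw [← hu0, hwNeg u0 hu0K]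
      have hblock : Cm.transpose.toSquareBlock w v = 1 := by
        refine Matrix.ext fun a b => ?_
        show Cm (b : Fin r) (a : Fin r)
            = (1 : Matrix {a : Fin r // w a = v} {a : Fin r // w a = v}
              (Polynomial (MvPolynomial (Fin (ℓ + 1)) F))) a b
        have hbK : ¬(sk ≤ (b : Fin r).val ∧ (b : Fin r).val < sk + μ k) := by
          intro hc
          have h2 : v = 1 + ((b : Fin r).val - sk) := (b.prop).symm.trans (hwPos _ hc)
          omega
        have hbT : ¬(sk + (μ k - m) ≤ (b : Fin r).val ∧ (b : Fin r).val < sk + μ k) := by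
          intro hc; exact hbK ⟨by omega, hc.2⟩
        rw [hCm]
        simp only [Matrix.of_apply]
        rw [if_neg hbT, Matrix.one_apply]
        by_cases hab : a = b
        · have hab' : (a : Fin r) = (b : Fin r) := by rw [hab]
          rw [if_pos hab', if_pos hab]
        · have hab' : ¬((a : Fin r) = (b : Fin r)) := fun hc => hab (Subtype.ext hc)
          rw [if_neg hab', if_neg hab]
      rw [hblock, Matrix.det_one]
  -- factor X out of the m special rows
  set cond : Fin r → Prop := fun s => sk + (μ k - m) ≤ s.val ∧ s.val < sk + μ k with hcond
  have hcondDec : DecidablePred cond := fun s => instDecidableAnd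
  set D : Matrix (Fin r) (Fin r) (Polynomial (MvPolynomial (Fin (ℓ + 1)) F)) :=
    Matrix.of (fun s j => if cond s then ((Cm * B) s j).divX else (Cm * B) s j) with hD
  set v : Fin r → Polynomial (MvPolynomial (Fin (ℓ + 1)) F) :=
    fun s => if cond s then Polynomial.X else 1 with hv
  have hfact : Cm * B = Matrix.of (fun s j => v s * D s j) := by
    ext s j
    simp only [Matrix.of_apply]
    rw [hv, hD]
    simp only [Matrix.of_apply]
    by_cases hc : cond s
    · rw [if_pos hc, if_pos hc]
      have h0 : ((Cm * B) s j).coeff 0 = 0 := hzero s hc.1 hc.2 j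
      conv_lhs => rw [← Polynomial.X_mul_divX_add ((Cm * B) s j)]
      rw [h0, map_zero, add_zero]
    · rw [if_neg hc, if_neg hc, one_mul]
  have hcard : (Finset.univ.filter cond).card = m := by
    rw [← Finset.card_range m]
    refine Finset.card_bij' (fun (u : Fin r) (_ : u ∈ Finset.univ.filter cond) =>
        u.val - (sk + (μ k - m)))
      (fun (o : ℕ) (ho : o ∈ Finset.range m) =>
        (⟨sk + (μ k - m) + o, by have := Finset.mem_range.1 ho; omega⟩ : Fin r)) ?_ ?_ ?_ ?_
    · intro u hu
      rw [Finset.mem_filter] at hu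
      have h2 := hu.2
      rw [hcond] at h2
      simp only [Finset.mem_range]
      omega
    · intro o ho
      rw [Finset.mem_filter]
      have := Finset.mem_range.1 ho
      refine ⟨Finset.mem_univ _, ?_⟩
      rw [hcond]
      constructor
      · simp
      · simp; omega
    · intro u hu
      rw [Finset.mem_filter] at hu
      have := hu.2
      rw [hcond] at this
      apply Fin.ext
      simp
      omega
    · intro o ho
      simp
  have hprodv : ∏ s : Fin r, v s = Polynomial.X ^ m := by
    rw [hv]
    rw [Finset.prod_ite (fun _ => (Polynomial.X : Polynomial (MvPolynomial (Fin (ℓ + 1)) F)))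
      (fun _ => 1)]
    rw [Finset.prod_const, Finset.prod_const_one, mul_one, hcard]
  have hdet2 : (Cm * B).det = Polynomial.X ^ m * D.det := by
    rw [hfact, Matrix.det_mul_column, hprodv]
  have hdetB : (Cm * B).det = B.det := by
    rw [Matrix.det_mul, hdetC, one_mul]
  rw [← hdetB, hdet2]
  exact Dvd.intro _ rfl



end GenResAux

/-- For every pair of distinct indices `i ≠ k`, the
multivariate polynomial `Δ(β) = det A(β)` is divisible in
`F[β_0, …, β_ℓ]` by `Π_{t=0}^{μ_k-1} (β_k - β_i α^t)^{min(μ_i, μ_k - t)}`. -/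
theorem generalized_resultant_factor (F : Type*) [Field F] [Fintype F]
    (ℓ r : ℕ) (hr : 1 ≤ r) (α : F) (hα : α ≠ 0) (hord : r ≤ orderOf α)
    (μ : Fin (ℓ + 1) → ℕ) (hμ : ∀ i, 1 ≤ μ i) (hsum : ∑ i, μ i = r) :
    ∀ i k : Fin (ℓ + 1), i ≠ k →
      (∏ t ∈ Finset.range (μ k),
          (MvPolynomial.X k - MvPolynomial.C (α ^ t) * MvPolynomial.X i) ^
            (min (μ i) (μ k - t))) ∣
        (burstA F ℓ r α μ).det := by
  intro i k hik
  classical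
  have hμk_le : μ k ≤ r := by
    have := Finset.single_le_sum (f := μ) (fun b _ => Nat.zero_le _) (Finset.mem_univ k)
    omega
  apply GenResAux.prod_pow_primes_dvd
  · intro t _
    exact GenResAux.prime_lin_factor (α ^ t) i k hik
  · intro t ht u hu htu
    apply GenResAux.lin_factor_not_dvd α i k hik
    intro he
    have ht' : t ∈ Set.Iio (orderOf α) := by
      have := Finset.mem_range.1 ht; exact Set.mem_Iio.2 (by omega)
    have hu' : u ∈ Set.Iio (orderOf α) := by
      have := Finset.mem_range.1 hu; exact Set.mem_Iio.2 (by omega)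
    exact htu (pow_injOn_Iio_orderOf ht' hu' he)
  · intro t ht
    apply GenResAux.dvd_of_psi_dvd α i k t hik
    rw [RingHom.map_det, RingHom.mapMatrix_apply]
    exact GenResAux.x_pow_dvd α μ i k t hμ hsum hik (Finset.mem_range.1 ht)
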